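/- For probability measures μ and ν on a product of two measurable spaces α × β, the Kullback–Leibler divergence between the first marginals is at most the Kullback–Leibler divergence between the joint measures: klDiv(μ.map Prod.fst, ν.map Prod.fst) ≤ klDiv(μ, ν). -/

import Mathlib

open MeasureTheory
open scoped Classical

/-- The Kullback–Leibler divergence of two measures, following the convention of
Mathlib's `ProbabilityTheory.klDiv`: it is `∫ log (dμ/dν) dμ` when `μ ≪ ν` and the
log-likelihood ratio is integrable, and `⊤` otherwise. -/
noncomputable def klDiv {α : Type*} [MeasurableSpace α] (μ ν : Measure α) : EReal :=
  if μ ≪ ν ∧ Integrable (llr μ ν) μ then ((∫ x, llr μ ν x ∂μ : ℝ) : EReal) else ⊤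

/-- for probability measures `μ` and `ν` on a product `α × β`, the
KL divergence between the first marginals is at most the KL divergence between the
joint measures: `klDiv (μ.map Prod.fst) (ν.map Prod.fst) ≤ klDiv μ ν`. -/
theorem klDiv_map_fst_le {α β : Type*} [MeasurableSpace α] [MeasurableSpace β]
    (μ ν : Measure (α × β)) [IsProbabilityMeasure μ] [IsProbabilityMeasure ν] :
    klDiv (μ.map Prod.fst) (ν.map Prod.fst) ≤ klDiv μ ν := by
  by_cases h : μ ≪ ν ∧ Integrable (llr μ ν) μ
  swap
  · have hT : klDiv μ ν = ⊤ := by rw [klDiv, if_neg h]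
    rw [hT]; exact le_top
  obtain ⟨hac, hint⟩ := h
  set μ₁ := μ.map Prod.fst with hμ₁def
  set ν₁ := ν.map Prod.fst with hν₁def
  have hμ₁p : IsProbabilityMeasure μ₁ := Measure.isProbabilityMeasure_map measurable_fst.aemeasurable
  have hν₁p : IsProbabilityMeasure ν₁ := Measure.isProbabilityMeasure_map measurable_fst.aemeasurable
  have hac₁ : μ₁ ≪ ν₁ := hac.map measurable_fst
  set f : α × β → ENNReal := μ.rnDeriv ν with hfdef
  set g : α → ENNReal := μ₁.rnDeriv ν₁ with hgdef
  set H : α × β → ENNReal := fun x => g x.1 / f x with hHdef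
  set h : α × β → ℝ := fun x => (H x).toReal with hhdef
  have hf_meas : Measurable f := Measure.measurable_rnDeriv μ ν
  have hg_meas : Measurable g := Measure.measurable_rnDeriv μ₁ ν₁
  have hH_meas : Measurable H := (hg_meas.comp measurable_fst).div hf_meas
  -- a.e. facts about f
  have hf_pos : ∀ᵐ x ∂μ, 0 < f x := Measure.rnDeriv_pos hac
  have hf_lt : ∀ᵐ x ∂μ, f x < ⊤ := hac.ae_le (Measure.rnDeriv_lt_top μ ν)
  -- a.e. facts about g, pulled back to μ
  have hg_ae₁ : ∀ᵐ a ∂μ₁, 0 < g a ∧ g a < ⊤ :=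
    (Measure.rnDeriv_pos hac₁).and (hac₁.ae_le (Measure.rnDeriv_lt_top μ₁ ν₁))
  have hg_ae : ∀ᵐ x ∂μ, 0 < g x.1 ∧ g x.1 < ⊤ := by
    have hs : MeasurableSet {a : α | 0 < g a ∧ g a < ⊤} :=
      hg_meas measurableSet_Ioo
    exact (ae_map_iff measurable_fst.aemeasurable hs).mp hg_ae₁
  -- bound on the lintegral of H
  have hHle : ∫⁻ x, H x ∂μ ≤ 1 := by
    calc ∫⁻ x, H x ∂μ = ∫⁻ x, f x * H x ∂ν :=
          (lintegral_rnDeriv_mul hac hH_meas.aemeasurable).symm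
      _ ≤ ∫⁻ x, g x.1 ∂ν := lintegral_mono fun x => ENNReal.mul_div_le
      _ = ∫⁻ a, g a ∂ν₁ := (lintegral_map hg_meas measurable_fst).symm
      _ ≤ μ₁ Set.univ := Measure.lintegral_rnDeriv_le
      _ = 1 := measure_univ
  have hh_int : Integrable h μ :=
    integrable_toReal_of_lintegral_ne_top hH_meas.aemeasurable
      (lt_of_le_of_lt hHle ENNReal.one_lt_top).ne
  have hh_integral_le : ∫ x, h x ∂μ ≤ 1 := by
    have hHlt : ∀ᵐ x ∂μ, H x < ⊤ := by
      filter_upwards [hf_pos, hg_ae] with x hfx hgx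
      exact ENNReal.div_lt_top hgx.2.ne hfx.ne'
    rw [hhdef]
    rw [integral_toReal hH_meas.aemeasurable hHlt]
    calc (∫⁻ x, H x ∂μ).toReal ≤ (1 : ENNReal).toReal :=
          ENNReal.toReal_mono ENNReal.one_ne_top hHle
      _ = 1 := by simp
  -- key a.e. identity : llr μ₁ ν₁ ∘ fst = llr μ ν + log ∘ h, and 0 < h
  have hkey : ∀ᵐ x ∂μ, llr μ₁ ν₁ x.1 = llr μ ν x + Real.log (h x) ∧ 0 < h x := by
    filter_upwards [hf_pos, hf_lt, hg_ae] with x hfx hfx' hgx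
    have hft : 0 < (f x).toReal := ENNReal.toReal_pos hfx.ne' hfx'.ne
    have hgt : 0 < (g x.1).toReal := ENNReal.toReal_pos hgx.1.ne' hgx.2.ne
    have hh_eq : h x = (g x.1).toReal / (f x).toReal := by
      rw [hhdef]; simp [hHdef, ENNReal.toReal_div]
    have hhpos : 0 < h x := by rw [hh_eq]; positivity
    refine ⟨?_, hhpos⟩
    rw [hh_eq, Real.log_div hgt.ne' hft.ne']
    simp only [llr]
    ring
  -- lower bound function : -exp(-llr μ₁ ν₁ ∘ fst), integrable
  have hexp_int₁ : Integrable (fun a => Real.exp (-llr μ₁ ν₁ a)) μ₁ :=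
    (Measure.integrable_toReal_rnDeriv (μ := ν₁) (ν := μ₁)).congr
      (exp_neg_llr hac₁).symm
  have hexp_int : Integrable (fun x : α × β => Real.exp (-llr μ₁ ν₁ x.1)) μ := by
    rw [← Function.comp_def]
    refine (integrable_map_measure ?_ measurable_fst.aemeasurable).mp hexp_int₁
    exact ((measurable_llr μ₁ ν₁).neg.exp).aestronglyMeasurable
  -- integrability of llr μ₁ ν₁ ∘ fst w.r.t. μ
  have hcomp_int : Integrable (fun x : α × β => llr μ₁ ν₁ x.1) μ := by
    have hlow : ∀ x : α × β, -Real.exp (-llr μ₁ ν₁ x.1) ≤ llr μ₁ ν₁ x.1 := by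
      intro x
      have := Real.add_one_le_exp (-llr μ₁ ν₁ x.1)
      linarith
    have hupp : ∀ᵐ x ∂μ, llr μ₁ ν₁ x.1 ≤ llr μ ν x + h x := by
      filter_upwards [hkey] with x hx
      have hlog := Real.log_le_sub_one_of_pos hx.2
      linarith [hx.1]
    exact integrable_of_le_of_le
      ((measurable_llr μ₁ ν₁).comp measurable_fst).aestronglyMeasurable
      (Filter.Eventually.of_forall hlow) hupp hexp_int.neg (hint.add hh_int)
  have hint₁ : Integrable (llr μ₁ ν₁) μ₁ := by
    refine (integrable_map_measure (stronglyMeasurable_llr μ₁ ν₁).aestronglyMeasurable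
      measurable_fst.aemeasurable).mpr ?_
    exact hcomp_int
  -- the integral inequality
  have hIeq : ∫ a, llr μ₁ ν₁ a ∂μ₁ = ∫ x, llr μ₁ ν₁ x.1 ∂μ := by
    rw [hμ₁def, integral_map measurable_fst.aemeasurable
      (stronglyMeasurable_llr _ _).aestronglyMeasurable]
  have hIle : ∫ x, llr μ₁ ν₁ x.1 ∂μ ≤ ∫ x, llr μ ν x ∂μ := by
    have hdiff : ∫ x, (llr μ₁ ν₁ x.1 - llr μ ν x) ∂μ ≤ ∫ x, (h x - 1) ∂μ := by
      refine integral_mono_ae (hcomp_int.sub hint) (hh_int.sub (integrable_const 1)) ?_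
      filter_upwards [hkey] with x hx
      have hlog := Real.log_le_sub_one_of_pos hx.2
      linarith [hx.1]
    rw [integral_sub hcomp_int hint, integral_sub hh_int (integrable_const 1),
      integral_const] at hdiff
    simp only [probReal_univ, smul_eq_mul, one_mul] at hdiff
    linarith [hh_integral_le]
  -- conclude
  rw [klDiv, klDiv, if_pos ⟨hac₁, hint₁⟩, if_pos ⟨hac, hint⟩]
  rw [EReal.coe_le_coe_iff]
  rw [hIeq]
  exact hIle
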